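/- Let n ≥ 1, let A be a nonempty finite index set, and for each i ∈ A let f_i : ℝⁿ → ℝ be differentiable with gradient ∇f_i Lipschitz continuous with constant L ≥ 0. Fix x̄ ∈ ℝⁿ and ε > 0, and for each i ∈ A let g_i^ε ∈ ℝⁿ be the simplex gradient of f_i over the coordinate simplex [x̄, x̄ + εe₁, …, x̄ + εe_n], i.e. (g_i^ε)_j = (f_i(x̄ + εe_j) − f_i(x̄))/ε. Let λ_i ≥ 0 for i ∈ A with Σ_{i∈A} λ_i = 1. Then ‖Σ_{i∈A} λ_i g_i^ε − Σ_{i∈A} λ_i ∇f_i(x̄)‖ ≤ (√n · L / 2) · ε. (This is the quantitative content of Theorem 3.3(i) of the paper: the convex combination of simplex gradients of the active subfunctions approximates the corresponding convex combination of exact gradients, a subgradient of the max-function, with error proportional to ε.) -/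

import Mathlib

open scoped RealInnerProductSpace

open Set in
/-- Quadratic descent lemma: if the gradient of `g` is `L`-Lipschitz then
`|g(x+εv) - g x - ε⟪∇g x, v⟫| ≤ L/2 * ε²` for unit-bounded `v`. -/
lemma aux_descent_lemma {F : Type*} [NormedAddCommGroup F] [InnerProductSpace ℝ F]
    [CompleteSpace F] (g : F → ℝ) (hg : Differentiable ℝ g) {L : ℝ} (hL : 0 ≤ L)
    (hlip : ∀ x y : F, ‖gradient g x - gradient g y‖ ≤ L * ‖x - y‖)
    (x v : F) (hv : ‖v‖ ≤ 1) {ε : ℝ} (hε : 0 ≤ ε) :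
    |g (x + ε • v) - g x - ε * ⟪gradient g x, v⟫| ≤ L / 2 * ε ^ 2 := by
  set φ : ℝ → ℝ := fun t => g (x + t • v) - g x - t * ⟪gradient g x, v⟫ with hφdef
  have hφ' : ∀ t : ℝ, HasDerivAt φ
      (⟪gradient g (x + t • v), v⟫ - ⟪gradient g x, v⟫) t := by
    intro t
    have hc : HasDerivAt (fun t : ℝ => x + t • v) v t := by
      simpa using ((hasDerivAt_id t).smul_const v).const_add x
    have h1 : HasDerivAt (fun t : ℝ => g (x + t • v))
        (⟪gradient g (x + t • v), v⟫) t := by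
      have := (hg (x + t • v)).hasGradientAt.hasFDerivAt.comp_hasDerivAt t hc
      simpa [InnerProductSpace.toDual_apply_apply, Function.comp_def] using this
    have h2 := (h1.sub_const (g x)).sub
      ((hasDerivAt_id t).mul_const (⟪gradient g x, v⟫))
    simpa [hφdef, Pi.sub_def] using h2
  have key : ∀ t ∈ Icc (0:ℝ) ε, ‖φ t‖ ≤ L / 2 * t ^ 2 := by
    have hB : ∀ t : ℝ, HasDerivAt (fun t : ℝ => L / 2 * t ^ 2) (L * t) t := by
      intro t
      have := (hasDerivAt_pow 2 t).const_mul (L / 2)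
      refine this.congr_deriv ?_
      ring
    refine image_norm_le_of_norm_deriv_right_le_deriv_boundary
      (f := φ) (f' := fun t => ⟪gradient g (x + t • v), v⟫ - ⟪gradient g x, v⟫)
      (fun t _ => (hφ' t).continuousAt.continuousWithinAt)
      (fun t _ => (hφ' t).hasDerivWithinAt) ?_ hB ?_
    · simp [hφdef]
    · intro t ht
      have h1 : |⟪gradient g (x + t • v) - gradient g x, v⟫| ≤
          ‖gradient g (x + t • v) - gradient g x‖ * ‖v‖ := abs_real_inner_le_norm _ _
      have h2 : ‖gradient g (x + t • v) - gradient g x‖ ≤ L * t := by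
        have := hlip (x + t • v) x
        simp only [add_sub_cancel_left] at this
        refine this.trans ?_
        have : ‖t • v‖ ≤ t := by
          rw [norm_smul, Real.norm_eq_abs, abs_of_nonneg ht.1]
          calc t * ‖v‖ ≤ t * 1 := by
                exact mul_le_mul_of_nonneg_left hv ht.1
            _ = t := mul_one t
        exact mul_le_mul_of_nonneg_left this hL
      calc ‖⟪gradient g (x + t • v), v⟫ - ⟪gradient g x, v⟫‖
          = |⟪gradient g (x + t • v) - gradient g x, v⟫| := by
            rw [inner_sub_left]; rfl
        _ ≤ ‖gradient g (x + t • v) - gradient g x‖ * ‖v‖ := h1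
        _ ≤ (L * t) * 1 := by
            exact mul_le_mul h2 hv (norm_nonneg _) (mul_nonneg hL ht.1)
        _ = L * t := mul_one _
  have := key ε ⟨hε, le_refl ε⟩
  simpa [hφdef, Real.norm_eq_abs] using this

/-- Theorem 3.3(i), quantitative form: a convex combination of coordinate-simplex
gradients of the active subfunctions approximates the corresponding convex combination
of exact gradients with error at most `(√n · L / 2) · ε`. -/
theorem convex_combination_simplex_gradient_error_bound
    {ι : Type*} (n : ℕ) (hn : 1 ≤ n) (A : Finset ι) (hA : A.Nonempty)
    (f : ι → EuclideanSpace ℝ (Fin n) → ℝ) (L : ℝ) (hL : 0 ≤ L)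
    (hf : ∀ i ∈ A, Differentiable ℝ (f i))
    (hlip : ∀ i ∈ A, ∀ x y : EuclideanSpace ℝ (Fin n),
      ‖gradient (f i) x - gradient (f i) y‖ ≤ L * ‖x - y‖)
    (xbar : EuclideanSpace ℝ (Fin n)) (ε : ℝ) (hε : 0 < ε)
    (gε : ι → EuclideanSpace ℝ (Fin n))
    (hgε : ∀ i ∈ A, ∀ j, gε i j =
      (f i (xbar + ε • EuclideanSpace.single j (1 : ℝ)) - f i xbar) / ε)
    (lam : ι → ℝ) (hlam : ∀ i ∈ A, 0 ≤ lam i) (hsum : ∑ i ∈ A, lam i = 1) :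
    ‖(∑ i ∈ A, lam i • gε i) - ∑ i ∈ A, lam i • gradient (f i) xbar‖ ≤
      (Real.sqrt n * L / 2) * ε := by
  set C : ℝ := Real.sqrt n * L / 2 * ε with hC
  -- per-index bound
  have key : ∀ i ∈ A, ‖gε i - gradient (f i) xbar‖ ≤ C := by
    intro i hi
    have coord : ∀ j, |(gε i - gradient (f i) xbar) j| ≤ L / 2 * ε := by
      intro j
      set v : EuclideanSpace ℝ (Fin n) := EuclideanSpace.single j (1 : ℝ) with hv
      have hvnorm : ‖v‖ ≤ 1 := by simp [hv]
      have hgrad : gradient (f i) xbar j = ⟪gradient (f i) xbar, v⟫ := by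
        rw [hv, EuclideanSpace.inner_single_right]
        simp
      have hd := aux_descent_lemma (f i) (hf i hi) hL (hlip i hi) xbar v hvnorm hε.le
      have happly : (gε i - gradient (f i) xbar) j
          = (f i (xbar + ε • v) - f i xbar - ε * ⟪gradient (f i) xbar, v⟫) / ε := by
        have : (gε i - gradient (f i) xbar) j = gε i j - gradient (f i) xbar j := rfl
        rw [this, hgε i hi j, hgrad]
        field_simp
        rw [hv]
      rw [happly, abs_div, abs_of_pos hε, div_le_iff₀ hε]
      calc |f i (xbar + ε • v) - f i xbar - ε * ⟪gradient (f i) xbar, v⟫|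
          ≤ L / 2 * ε ^ 2 := hd
        _ = L / 2 * ε * ε := by ring
    -- norm bound from coordinates
    have h1 : ‖gε i - gradient (f i) xbar‖ ≤ Real.sqrt (n * (L / 2 * ε) ^ 2) := by
      rw [EuclideanSpace.norm_eq]
      apply Real.sqrt_le_sqrt
      calc ∑ j, ‖(gε i - gradient (f i) xbar) j‖ ^ 2
          ≤ ∑ _j : Fin n, (L / 2 * ε) ^ 2 := by
            apply Finset.sum_le_sum
            intro j _
            have := coord j
            rw [Real.norm_eq_abs]
            exact pow_le_pow_left₀ (abs_nonneg _) this 2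
        _ = n * (L / 2 * ε) ^ 2 := by simp [Finset.sum_const, mul_comm]
    refine h1.trans_eq ?_
    rw [Real.sqrt_mul (by positivity), Real.sqrt_sq (by positivity)]
    ring
  -- combine
  have hrw : (∑ i ∈ A, lam i • gε i) - ∑ i ∈ A, lam i • gradient (f i) xbar
      = ∑ i ∈ A, lam i • (gε i - gradient (f i) xbar) := by
    rw [← Finset.sum_sub_distrib]
    simp_rw [smul_sub]
  rw [hrw]
  calc ‖∑ i ∈ A, lam i • (gε i - gradient (f i) xbar)‖
      ≤ ∑ i ∈ A, ‖lam i • (gε i - gradient (f i) xbar)‖ := norm_sum_le _ _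
    _ ≤ ∑ i ∈ A, lam i * C := by
        apply Finset.sum_le_sum
        intro i hi
        rw [norm_smul, Real.norm_eq_abs, abs_of_nonneg (hlam i hi)]
        exact mul_le_mul_of_nonneg_left (key i hi) (hlam i hi)
    _ = C := by rw [← Finset.sum_mul, hsum, one_mul]
    _ = Real.sqrt n * L / 2 * ε := hC
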